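/- arXiv:2202.05314 — 2 statements merged into one kernel-verified Lean document; each statement's English description precedes it below -/
import Mathlib

section
/- With X = F_{q^t}, A a (t−ℓ)-dimensional and V an ℓ-dimensional F_q-subspace with A ∩ V = {0}, and S = F_{q^t}^* × A, for any two distinct x, x′ ∈ X and any α ∈ A, the number of pairs s = (s₁, s₂) ∈ S with s₁x + s₂ ∈ α + V and s₁x′ + s₂ ∈ α + V equals q^ℓ − 1. -/
/-- With `X = F_{q^t}` (modelled as `K`), `A` a `(t−ℓ)`-dimensional and
`V` an `ℓ`-dimensional `F_q`-subspace with `A ∩ V = {0}`, and `S = K* × A`, for any two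
distinct `x, x' ∈ K` and any `α ∈ A`, the number of pairs `s = (s₁, s₂) ∈ S` with
`s₁ x + s₂ ∈ α + V` and `s₁ x' + s₂ ∈ α + V` equals `q^ℓ − 1`. -/
theorem pair_count {F K : Type*} [Field F] [Fintype F] [Field K] [Fintype K]
    [Algebra F K] (q t ℓ : ℕ)
    (hq : Fintype.card F = q) (ht : Module.finrank F K = t)
    (hℓ : 1 ≤ ℓ) (hℓt : ℓ < t)
    (A V : Submodule F K)
    (hA : Module.finrank F A = t - ℓ) (hV : Module.finrank F V = ℓ)
    (hAV : A ⊓ V = ⊥)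
    (x x' : K) (hxx' : x ≠ x') (α : K) (hα : α ∈ A) :
    Nat.card {s : Kˣ × A //
        (s.1 : K) * x + (s.2 : K) - α ∈ V ∧ (s.1 : K) * x' + (s.2 : K) - α ∈ V}
      = q ^ ℓ - 1 := by
  classical
  have hdx : x - x' ≠ 0 := sub_ne_zero.mpr hxx'
  have hsup : A ⊔ V = ⊤ := by
    apply Submodule.eq_top_of_finrank_eq
    have h := Submodule.finrank_sup_add_finrank_inf_eq A V
    rw [hAV, finrank_bot] at h
    rw [ht, hA, hV] at *
    omega
  -- the bijection
  let e : {s : Kˣ × A //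
        (s.1 : K) * x + (s.2 : K) - α ∈ V ∧ (s.1 : K) * x' + (s.2 : K) - α ∈ V} →
      {v : V // v ≠ 0} := fun s =>
    ⟨⟨(s.1.1 : K) * (x - x'), by
        have := Submodule.sub_mem V s.2.1 s.2.2
        have heq : ((s.1.1 : K) * x + (s.1.2 : K) - α) - ((s.1.1 : K) * x' + (s.1.2 : K) - α)
            = (s.1.1 : K) * (x - x') := by ring
        rwa [heq] at this⟩, by
      intro hv
      have : (s.1.1 : K) * (x - x') = 0 := congrArg Subtype.val hv
      exact (mul_ne_zero (Units.ne_zero s.1.1) hdx) this⟩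
  have hbij : Function.Bijective e := by
    constructor
    · rintro ⟨⟨s₁, s₂⟩, h1, h2⟩ ⟨⟨s₁', s₂'⟩, h1', h2'⟩ hss
      have hv : (s₁ : K) * (x - x') = (s₁' : K) * (x - x') := by
        have := congrArg (fun z : {v : V // v ≠ 0} => ((z.1 : K))) hss
        simpa [e] using this
      have hs1 : s₁ = s₁' := by
        ext
        exact mul_right_cancel₀ hdx hv
      subst hs1
      have hin : (s₂ : K) - (s₂' : K) ∈ A ⊓ V := by
        refine ⟨Submodule.sub_mem A s₂.2 s₂'.2, ?_⟩
        have := Submodule.sub_mem V h1 h1'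
        have heq : ((s₁ : K) * x + (s₂ : K) - α) - ((s₁ : K) * x + (s₂' : K) - α)
            = (s₂ : K) - (s₂' : K) := by ring
        rwa [heq] at this
      rw [hAV, Submodule.mem_bot] at hin
      have : s₂ = s₂' := by
        ext; exact sub_eq_zero.mp hin
      simp [this]
    · rintro ⟨⟨v, hvV⟩, hvne⟩
      have hv0 : v ≠ 0 := fun h => hvne (by simp [h])
      set s₁ : Kˣ := Units.mk0 (v * (x - x')⁻¹) (mul_ne_zero hv0 (inv_ne_zero hdx)) with hs₁
      have hs1x : (s₁ : K) * (x - x') = v := by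
        rw [hs₁, Units.val_mk0, inv_mul_cancel_right₀ hdx]
      have hmem : α - (s₁ : K) * x ∈ A ⊔ V := by rw [hsup]; trivial
      rw [Submodule.mem_sup] at hmem
      obtain ⟨a, haA, w, hwV, haw⟩ := hmem
      have hc1 : (s₁ : K) * x + a - α ∈ V := by
        have : (s₁ : K) * x + a - α = -w := by
          have := haw; linear_combination this
        rw [this]; exact Submodule.neg_mem V hwV
      have hc2 : (s₁ : K) * x' + a - α ∈ V := by
        have heq : (s₁ : K) * x' + a - α = ((s₁ : K) * x + a - α) - (s₁ : K) * (x - x') := by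
          ring
        rw [heq, hs1x]
        exact Submodule.sub_mem V hc1 hvV
      refine ⟨⟨(s₁, ⟨a, haA⟩), hc1, hc2⟩, ?_⟩
      apply Subtype.ext
      apply Subtype.ext
      exact hs1x
  have hcard := Nat.card_eq_of_bijective e hbij
  rw [hcard]
  have hVcard : Nat.card V = q ^ ℓ := by
    rw [Nat.card_eq_fintype_card, Module.card_eq_pow_finrank (K := F), hq, hV]
  have hne : Fintype.card {v : V // v ≠ 0} = Fintype.card V - 1 := by
    simpa using Fintype.card_subtype_compl (fun v : V => v = 0)
  rw [Nat.card_eq_fintype_card, hne, ← Nat.card_eq_fintype_card, hVcard]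
end

section
/- With X = F_{q^t}, A, V, S as above, define f : S × X → A by f((s₁,s₂), x) = α iff s₁x + s₂ ∈ α + V (well-defined since X = A ⊕ V). Then for every fixed s ∈ S, the sets {x : f(s, x) = α}, α ∈ A, together over all s ∈ S form the blocks of a (v, k, λ)-BIBD on X with parameters v = q^t, b = q^{t−ℓ}(q^t − 1), r = q^t − 1, k = q^ℓ, λ = q^ℓ − 1; moreover f is the functional form of a mosaic of such BIBDs indexed by A. -/
/-- With `X = F_{q^t}` (modelled as `K`), `A` a `(t−ℓ)`-dimensional and
`V` an `ℓ`-dimensional `F_q`-subspace with `A ∩ V = {0}`, and `S = K* × A`, the relation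
`f((s₁,s₂), x) = α ⟺ s₁ x + s₂ ∈ α + V` is well-defined (each pair `(s, x)` determines
a unique `α ∈ A`, so `f` is the functional form of a mosaic indexed by `A`), and for
every `α ∈ A` the blocks `{x : f(s, x) = α}`, `s ∈ S`, form a `(v, k, λ)`-BIBD on `K`
with parameters `v = q^t`, `b = q^{t−ℓ}(q^t − 1)`, `r = q^t − 1`, `k = q^ℓ`,
`λ = q^ℓ − 1`. -/
theorem bibd_mosaic_from_field {F K : Type*} [Field F] [Fintype F] [Field K] [Fintype K]
    [Algebra F K] (q t ℓ : ℕ)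
    (hq : Fintype.card F = q) (ht : Module.finrank F K = t)
    (hℓ : 1 ≤ ℓ) (hℓt : ℓ < t)
    (A V : Submodule F K)
    (hA : Module.finrank F A = t - ℓ) (hV : Module.finrank F V = ℓ)
    (hAV : A ⊓ V = ⊥) :
    -- the number of points is v = q^t
    (Nat.card K = q ^ t) ∧
    -- the number of blocks (block indices) is b = q^{t-ℓ}(q^t - 1)
    (Nat.card (Kˣ × A) = q ^ (t - ℓ) * (q ^ t - 1)) ∧
    -- f is well defined: a mosaic indexed by A
    (∀ (s : Kˣ × A) (x : K), ∃! α : A, (s.1 : K) * x + (s.2 : K) - (α : K) ∈ V) ∧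
    -- every block has k = q^ℓ points
    (∀ (s : Kˣ × A) (α : A),
      Nat.card {x : K // (s.1 : K) * x + (s.2 : K) - (α : K) ∈ V} = q ^ ℓ) ∧
    -- replication number r = q^t - 1 in each member of the mosaic
    (∀ (α : A) (x : K),
      Nat.card {s : Kˣ × A // (s.1 : K) * x + (s.2 : K) - (α : K) ∈ V} = q ^ t - 1) ∧
    -- any two distinct points lie in λ = q^ℓ - 1 common blocks of each member
    (∀ (α : A) (x x' : K), x ≠ x' →
      Nat.card {s : Kˣ × A //
          (s.1 : K) * x + (s.2 : K) - (α : K) ∈ V ∧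
          (s.1 : K) * x' + (s.2 : K) - (α : K) ∈ V}
        = q ^ ℓ - 1) := by
  classical
  have fA : Fintype A := Fintype.ofFinite _
  have fV : Fintype V := Fintype.ofFinite _
  -- cardinalities
  have cardK : Nat.card K = q ^ t := by
    rw [Nat.card_eq_fintype_card, Module.card_eq_pow_finrank (K := F), hq, ht]
  have cardA : Nat.card A = q ^ (t - ℓ) := by
    rw [Nat.card_eq_fintype_card, Module.card_eq_pow_finrank (K := F), hq, hA]
  have cardV : Nat.card V = q ^ ℓ := by
    rw [Nat.card_eq_fintype_card, Module.card_eq_pow_finrank (K := F), hq, hV]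
  have cardKx : Nat.card Kˣ = q ^ t - 1 := by
    rw [Nat.card_eq_fintype_card, Fintype.card_units, ← cardK, Nat.card_eq_fintype_card]
  -- A ⊔ V = ⊤
  have hsup : A ⊔ V = ⊤ := by
    apply Submodule.eq_top_of_finrank_eq
    have h := Submodule.finrank_sup_add_finrank_inf_eq A V
    rw [hAV, finrank_bot, add_zero, hA, hV] at h
    rw [h, ht]
    omega
  -- unique decomposition
  have uniq : ∀ y : K, ∃! α : A, y - (α : K) ∈ V := by
    intro y
    have hy : y ∈ A ⊔ V := by rw [hsup]; trivial
    rcases Submodule.mem_sup.mp hy with ⟨a, ha, v, hv, hav⟩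
    refine ⟨⟨a, ha⟩, by simpa [← hav] using hv, ?_⟩
    intro β hβ
    have hd : (β : K) - a ∈ A ⊓ V := by
      refine ⟨A.sub_mem β.2 ha, ?_⟩
      have h1 : (y - a) - (y - (β : K)) ∈ V := V.sub_mem (by simpa [← hav] using hv) hβ
      have heq : (y - a) - (y - (β : K)) = (β : K) - a := by ring
      rwa [heq] at h1
    rw [hAV] at hd
    have : (β : K) = a := by
      have h0 := Submodule.mem_bot F |>.mp hd
      linear_combination h0
    exact Subtype.ext this
  refine ⟨cardK, ?_, fun s x => uniq _, ?_, ?_, ?_⟩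
  · rw [Nat.card_prod, cardKx, cardA, mul_comm]
  -- block size
  · intro s α
    have h1 : ((s.1 : K)) ≠ 0 := Units.ne_zero s.1
    have e : {x : K // (s.1 : K) * x + (s.2 : K) - (α : K) ∈ V} ≃ V :=
      { toFun := fun x => ⟨(s.1 : K) * x.1 + (s.2 : K) - (α : K), x.2⟩
        invFun := fun v => ⟨(s.1 : K)⁻¹ * (v.1 + (α : K) - (s.2 : K)), by
          have heq : (s.1 : K) * ((s.1 : K)⁻¹ * (v.1 + (α : K) - (s.2 : K))) + (s.2 : K)
              - (α : K) = v.1 := by field_simp; ring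
          rw [heq]; exact v.2⟩
        left_inv := fun x => by
          apply Subtype.ext; field_simp; ring
        right_inv := fun v => by
          apply Subtype.ext; simp only; field_simp; ring }
    rw [Nat.card_congr e, cardV]
  -- replication
  · intro α x
    have hb : Function.Bijective
        (fun s : {s : Kˣ × A // (s.1 : K) * x + (s.2 : K) - (α : K) ∈ V} => s.1.1) := by
      constructor
      · rintro ⟨⟨u, a⟩, ha⟩ ⟨⟨u', a'⟩, ha'⟩ h
        simp only at h
        subst h
        rcases uniq ((α : K) - (u : K) * x) with ⟨β, hβ, hu⟩
        have key : ∀ (b : A), (u : K) * x + (b : K) - (α : K) ∈ V → b = β := by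
          intro b hbmem
          refine hu b ?_
          show (α : K) - (u : K) * x - (b : K) ∈ V
          have heq : ((α : K) - (u : K) * x) - (b : K)
              = -((u : K) * x + (b : K) - (α : K)) := by ring
          rw [heq]; exact V.neg_mem hbmem
        have e1 : a = β := key a ha
        have e2 : a' = β := key a' ha'
        simp [e1, e2]
      · intro u
        rcases uniq ((α : K) - (u : K) * x) with ⟨β, hβ, -⟩
        refine ⟨⟨(u, β), ?_⟩, rfl⟩
        have heq : (u : K) * x + (β : K) - (α : K)
            = -(((α : K) - (u : K) * x) - (β : K)) := by ring
        rw [heq]; exact V.neg_mem hβ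
    rw [Nat.card_congr (Equiv.ofBijective _ hb), cardKx]
  -- lambda
  · intro α x x' hxx
    set d : K := x - x' with hd
    have hdne : d ≠ 0 := sub_ne_zero.mpr hxx
    have hb : Function.Bijective
        (fun s : {s : Kˣ × A // (s.1 : K) * x + (s.2 : K) - (α : K) ∈ V ∧
            (s.1 : K) * x' + (s.2 : K) - (α : K) ∈ V} =>
          (⟨s.1.1, by
            have h1 := V.sub_mem s.2.1 s.2.2
            have heq : ((s.1.1 : K) * x + (s.1.2 : K) - (α : K))
                - ((s.1.1 : K) * x' + (s.1.2 : K) - (α : K)) = (s.1.1 : K) * d := by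
              rw [hd]; ring
            rwa [heq] at h1⟩ : {u : Kˣ // (u : K) * d ∈ V})) := by
      constructor
      · rintro ⟨⟨u, a⟩, ha1, ha2⟩ ⟨⟨u', a'⟩, ha'1, ha'2⟩ h
        simp only [Subtype.mk.injEq] at h
        subst h
        rcases uniq ((α : K) - (u : K) * x) with ⟨β, hβ, hu⟩
        have key : ∀ (b : A), (u : K) * x + (b : K) - (α : K) ∈ V → b = β := by
          intro b hbmem
          refine hu b ?_
          show (α : K) - (u : K) * x - (b : K) ∈ V
          have heq : ((α : K) - (u : K) * x) - (b : K)
              = -((u : K) * x + (b : K) - (α : K)) := by ring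
          rw [heq]; exact V.neg_mem hbmem
        have e1 : a = β := key a ha1
        have e2 : a' = β := key a' ha'1
        simp [e1, e2]
      · rintro ⟨u, hu⟩
        rcases uniq ((α : K) - (u : K) * x) with ⟨β, hβ, -⟩
        have hmem1 : (u : K) * x + (β : K) - (α : K) ∈ V := by
          have heq : (u : K) * x + (β : K) - (α : K)
              = -(((α : K) - (u : K) * x) - (β : K)) := by ring
          rw [heq]; exact V.neg_mem hβ
        have hmem2 : (u : K) * x' + (β : K) - (α : K) ∈ V := by
          have h2 := V.sub_mem hmem1 hu
          have heq : (u : K) * x + (β : K) - (α : K) - (u : K) * d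
              = (u : K) * x' + (β : K) - (α : K) := by rw [hd]; ring
          rwa [heq] at h2
        exact ⟨⟨(u, β), hmem1, hmem2⟩, rfl⟩
    rw [Nat.card_congr (Equiv.ofBijective _ hb)]
    have e2 : {u : Kˣ // (u : K) * d ∈ V} ≃ {v : V // (v : K) ≠ 0} :=
      { toFun := fun u => ⟨⟨(u.1 : K) * d, u.2⟩, mul_ne_zero (Units.ne_zero u.1) hdne⟩
        invFun := fun v => ⟨Units.mk0 ((v.1 : K) / d) (div_ne_zero v.2 hdne), by
          have heq : ((v.1 : K) / d) * d = (v.1 : K) := div_mul_cancel₀ _ hdne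
          simpa [heq] using v.1.2⟩
        left_inv := fun u => by
          apply Subtype.ext; apply Units.ext
          simp [mul_div_cancel_right₀ _ hdne]
        right_inv := fun v => by
          apply Subtype.ext; apply Subtype.ext
          simp [div_mul_cancel₀ _ hdne] }
    rw [Nat.card_congr e2]
    have hcount : Nat.card {v : V // (v : K) ≠ 0} = Nat.card V - 1 := by
      have e3 : {v : V // (v : K) ≠ 0} ≃ {v : V // v ≠ 0} :=
        Equiv.subtypeEquivRight (fun v => by
          constructor
          · intro h h0; exact h (by rw [h0]; rfl)
          · intro h h0; exact h (Subtype.ext h0))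
      rw [Nat.card_congr e3, Nat.card_eq_fintype_card, Nat.card_eq_fintype_card]
      simpa using Fintype.card_subtype_ne (0 : V)
    rw [hcount, cardV]
end
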